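/- Let A ∈ ℝ^{m×n} have i.i.d. standard normal entries and let x ∈ ℝ^n be a fixed vector. Then for any ε ∈ (0,1): P( (1−ε)‖x‖₂² ≤ ‖(1/√m) A x‖₂² ≤ (1+ε)‖x‖₂² ) ≥ 1 − 2 e^{−ε²(1−ε)m/4}. -/

import Mathlib

open MeasureTheory ProbabilityTheory Matrix Real
open scoped NNReal ENNReal

/-- The squared-sum Euclidean (ℓ₂) norm of a vector in `Fin d → ℝ`. -/
noncomputable def l2norm {d : ℕ} (v : Fin d → ℝ) : ℝ := Real.sqrt (∑ i, (v i) ^ 2)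

/-- `A : Ω → ℝ^{m×n}` (given through its rows) has i.i.d. standard normal entries:
its distribution is the product of `m·n` standard Gaussians. -/
def IIDStdGaussian {Ω : Type} [MeasurableSpace Ω] (P : Measure Ω) (m n : ℕ)
    (A : Ω → Fin m → Fin n → ℝ) : Prop :=
  Measure.map A P = Measure.pi fun _ : Fin m => Measure.pi fun _ : Fin n => gaussianReal 0 1




lemma auxE1 {ε : ℝ} (h0 : 0 ≤ ε) : 1 + ε ≤ Real.exp (ε - ε^2/2 + ε^3/2) := by
  have h := Real.sum_le_exp_of_nonneg (x := ε - ε^2/2 + ε^3/2) (by nlinarith) 3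
  have hexp : (1 : ℝ) + (ε - ε^2/2 + ε^3/2) + (ε - ε^2/2 + ε^3/2)^2/2
      ≤ Real.exp (ε - ε^2/2 + ε^3/2) := by
    refine le_trans (le_of_eq ?_) h
    rw [Finset.sum_range_succ, Finset.sum_range_succ, Finset.sum_range_succ,
      Finset.sum_range_zero]
    norm_num
  nlinarith [sq_nonneg (ε - ε^2/2), sq_nonneg ε]

lemma aux_cubic {s : ℝ} (hs : 0 ≤ s) : 1 - s + s^2/2 - s^3/6 ≤ Real.exp (-s) := by
  set g1 : ℝ → ℝ := fun s => -Real.exp (-s) + (1 - s + s^2/2) with hg1def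
  have hd1 : ∀ x : ℝ, HasDerivAt g1 (Real.exp (-x) - 1 + x) x := by
    intro x
    have h1 : HasDerivAt (fun s : ℝ => Real.exp (-s)) (Real.exp (-x) * (-1)) x :=
      (hasDerivAt_neg x).exp
    have h2 : HasDerivAt (fun s : ℝ => 1 - s + s^2/2) (0 - 1 + (2 * x^1 / 2)) x := by
      exact (((hasDerivAt_const x (1:ℝ)).sub (hasDerivAt_id x)).add
        ((hasDerivAt_pow 2 x).div_const 2))
    have := h1.neg.add h2
    exact this.congr_deriv (by ring)
  have hg1mono : Monotone g1 := by
    apply monotone_of_deriv_nonneg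
    · exact fun x => (hd1 x).differentiableAt
    · intro x
      rw [(hd1 x).deriv]
      nlinarith [Real.add_one_le_exp (-x)]
  have hg1zero : g1 0 = 0 := by simp [hg1def]
  have hg1nonneg : ∀ x : ℝ, 0 ≤ x → 0 ≤ g1 x := fun x hx => hg1zero ▸ hg1mono hx
  set g : ℝ → ℝ := fun s => Real.exp (-s) - (1 - s + s^2/2 - s^3/6) with hgdef
  have hd : ∀ x : ℝ, HasDerivAt g (g1 x) x := by
    intro x
    have h1 : HasDerivAt (fun s : ℝ => Real.exp (-s)) (Real.exp (-x) * (-1)) x :=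
      (hasDerivAt_neg x).exp
    have h2 : HasDerivAt (fun s : ℝ => 1 - s + s^2/2 - s^3/6)
        (0 - 1 + (2 * x^1 / 2) - (3 * x^2 / 6)) x :=
      (((hasDerivAt_const x (1:ℝ)).sub (hasDerivAt_id x)).add
        ((hasDerivAt_pow 2 x).div_const 2)).sub ((hasDerivAt_pow 3 x).div_const 6)
    have := h1.sub h2
    exact this.congr_deriv (by simp [hg1def]; ring)
  have hgmono : MonotoneOn g (Set.Ici 0) := by
    apply monotoneOn_of_deriv_nonneg (convex_Ici 0)
    · exact Continuous.continuousOn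
        (continuous_iff_continuousAt.mpr fun x => (hd x).differentiableAt.continuousAt)
    · intro x _
      exact (hd x).differentiableAt.differentiableWithinAt
    · intro x hx
      rw [(hd x).deriv]
      exact hg1nonneg x (le_of_lt (by simpa using hx))
  have hg0 : g 0 = 0 := by simp [hgdef]
  have := hgmono (Set.self_mem_Ici) (Set.mem_Ici.mpr hs) hs
  rw [hg0] at this
  simpa [hgdef, sub_nonneg] using this

lemma auxE2 {ε : ℝ} (h0 : 0 ≤ ε) (h1 : ε ≤ 1) : 1 - ε ≤ Real.exp (-ε - ε^2/2) := by
  have h := aux_cubic (s := ε + ε^2/2) (by nlinarith)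
  have : -(ε + ε^2/2) = -ε - ε^2/2 := by ring
  rw [this] at h
  refine le_trans ?_ h
  nlinarith [pow_nonneg h0 3, pow_nonneg h0 4, pow_nonneg h0 5, pow_nonneg h0 6,
    pow_le_one₀ h0 h1 (n := 3), pow_le_one₀ h0 h1 (n := 4), pow_le_one₀ h0 h1 (n := 5),
    pow_le_one₀ h0 h1 (n := 6), sq_nonneg ε, mul_nonneg h0 h0]



lemma aux_conv (a b : ℝ≥0) (ha : a ≠ 0) (hb : b ≠ 0) (t : ℝ) :
    ∫ u, gaussianPDFReal 0 a u * gaussianPDFReal 0 b (t - u)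
      = gaussianPDFReal 0 (a + b) t := by
  have hA : (0:ℝ) < a := lt_of_le_of_ne a.coe_nonneg (by exact_mod_cast (Ne.symm ha))
  have hB : (0:ℝ) < b := lt_of_le_of_ne b.coe_nonneg (by exact_mod_cast (Ne.symm hb))
  set A : ℝ := (a:ℝ) with hAdef
  set B : ℝ := (b:ℝ) with hBdef
  have hAB : (0:ℝ) < A + B := by positivity
  set k : ℝ := (A + B) / (2 * A * B) with hkdef
  have hk : 0 < k := by positivity
  set c : ℝ := A * t / (A + B) with hcdef
  have hA0 : A ≠ 0 := ne_of_gt hA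
  have hB0 : B ≠ 0 := ne_of_gt hB
  have hAB0 : A + B ≠ 0 := ne_of_gt hAB
  set C : ℝ := (√(2 * π * A))⁻¹ * (√(2 * π * B))⁻¹ * Real.exp (-(t^2 / (2 * (A + B))))
    with hCdef
  have key : ∀ u : ℝ, gaussianPDFReal 0 a u * gaussianPDFReal 0 b (t - u)
      = C * Real.exp (-(k * (u - c)^2)) := by
    intro u
    simp only [gaussianPDFReal, sub_zero]
    have h2 : rexp (-u ^ 2 / (2 * A)) * rexp (-(t - u) ^ 2 / (2 * B))
        = rexp (-(t ^ 2 / (2 * (A + B)))) * rexp (-(k * (u - c) ^ 2)) := by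
      rw [← Real.exp_add, ← Real.exp_add]
      congr 1
      rw [hkdef, hcdef]
      field_simp
      ring_nf
    calc (√(2 * π * A))⁻¹ * rexp (-u ^ 2 / (2 * A)) *
        ((√(2 * π * B))⁻¹ * rexp (-(t - u) ^ 2 / (2 * B)))
        = (√(2 * π * A))⁻¹ * (√(2 * π * B))⁻¹ *
          (rexp (-u ^ 2 / (2 * A)) * rexp (-(t - u) ^ 2 / (2 * B))) := by ring
      _ = (√(2 * π * A))⁻¹ * (√(2 * π * B))⁻¹ *
          (rexp (-(t ^ 2 / (2 * (A + B)))) * rexp (-(k * (u - c) ^ 2))) := by rw [h2]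
      _ = C * rexp (-(k * (u - c) ^ 2)) := by rw [hCdef]; ring
  rw [integral_congr_ae (Filter.Eventually.of_forall key), integral_const_mul]
  have htrans : ∫ u, Real.exp (-(k * (u - c)^2)) = ∫ u, Real.exp (-(k * u^2)) := by
    exact integral_sub_right_eq_self (fun u => Real.exp (-(k * u^2))) c
  rw [htrans]
  simp_rw [neg_mul_eq_neg_mul]
  rw [integral_gaussian]
  simp only [gaussianPDFReal, sub_zero, hCdef]
  have coef : (√(2 * π * A))⁻¹ * (√(2 * π * B))⁻¹ * √(π / k)
      = (√(2 * π * (A + B)))⁻¹ := by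
    rw [← Real.sqrt_inv, ← Real.sqrt_inv, ← Real.sqrt_inv, ← Real.sqrt_mul (by positivity),
      ← Real.sqrt_mul (by positivity)]
    congr 1
    rw [hkdef]
    field_simp
  have : NNReal.toReal (a + b) = A + B := by push_cast; ring
  rw [this]
  calc (√(2 * π * A))⁻¹ * (√(2 * π * B))⁻¹ * rexp (-(t ^ 2 / (2 * (A + B)))) * √(π / k)
      = ((√(2 * π * A))⁻¹ * (√(2 * π * B))⁻¹ * √(π / k)) * rexp (-(t ^ 2 / (2 * (A + B)))) := by
        ring
    _ = (√(2 * π * (A + B)))⁻¹ * rexp (-t ^ 2 / (2 * (A + B))) := by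
        rw [coef]; congr 1; ring



lemma aux_gauss_add (a b : ℝ≥0) :
    ((gaussianReal 0 a).prod (gaussianReal 0 b)).map (fun p => p.1 + p.2)
      = gaussianReal 0 (a + b) := by
  by_cases ha : a = 0
  · subst ha
    rw [gaussianReal_zero_var, zero_add]
    rw [Measure.dirac_prod]
    rw [Measure.map_map measurable_add measurable_prodMk_left]
    simp only [Function.comp_def, zero_add]
    exact Measure.map_id
  by_cases hb : b = 0
  · subst hb
    rw [gaussianReal_zero_var, add_zero]
    rw [Measure.prod_dirac]
    rw [Measure.map_map measurable_add measurable_prodMk_right]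
    simp only [Function.comp_def, add_zero]
    exact Measure.map_id
  have hab : a + b ≠ 0 := by simp [ha]
  ext s hs
  rw [Measure.map_apply measurable_add hs, Measure.prod_apply (measurable_add hs)]
  have step1 : ∀ u : ℝ, (gaussianReal 0 b) (Prod.mk u ⁻¹' ((fun p : ℝ × ℝ => p.1 + p.2) ⁻¹' s))
      = ENNReal.ofReal (∫ t in s, gaussianPDFReal u b t) := by
    intro u
    have hpre : Prod.mk u ⁻¹' ((fun p : ℝ × ℝ => p.1 + p.2) ⁻¹' s) = (fun v => u + v) ⁻¹' s := by
      rfl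
    rw [hpre, ← Measure.map_apply (measurable_const_add u) hs, gaussianReal_map_const_add,
      zero_add, gaussianReal_apply_eq_integral _ hb]
  simp_rw [step1]
  -- now compute ∫⁻ u, ofReal (∫ t in s, pdf u b t) ∂(gaussianReal 0 a)
  have hcont : Continuous (fun q : ℝ × ℝ => gaussianPDFReal q.1 b q.2) := by
    unfold gaussianPDFReal
    fun_prop
  have hmeas2 : Measurable (fun q : ℝ × ℝ => ENNReal.ofReal (gaussianPDFReal q.1 b q.2)) :=
    (hcont.measurable).ennreal_ofReal
  have hofint : ∀ u : ℝ, ENNReal.ofReal (∫ t in s, gaussianPDFReal u b t)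
      = ∫⁻ t in s, ENNReal.ofReal (gaussianPDFReal u b t) := by
    intro u
    rw [ofReal_integral_eq_lintegral_ofReal ((integrable_gaussianPDFReal u b).restrict)
      (Filter.Eventually.of_forall (gaussianPDFReal_nonneg u b))]
  simp_rw [hofint]
  rw [gaussianReal_of_var_ne_zero 0 ha]
  rw [lintegral_withDensity_eq_lintegral_mul _ (measurable_gaussianPDF 0 a)
    (Measurable.lintegral_prod_right' hmeas2)]
  simp only [Pi.mul_apply]
  have hpull : ∀ u : ℝ, gaussianPDF 0 a u * ∫⁻ t in s, ENNReal.ofReal (gaussianPDFReal u b t)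
      = ∫⁻ t in s, gaussianPDF 0 a u * ENNReal.ofReal (gaussianPDFReal u b t) := by
    intro u
    rw [← lintegral_const_mul' (gaussianPDF 0 a u) _ (by simp [gaussianPDF])]
  simp_rw [hpull]
  rw [lintegral_lintegral_swap]
  swap
  · exact ((measurable_gaussianPDF 0 a).comp measurable_fst).mul hmeas2 |>.aemeasurable
  have hinner : ∀ t : ℝ, ∫⁻ u, gaussianPDF 0 a u * ENNReal.ofReal (gaussianPDFReal u b t)
      = ENNReal.ofReal (gaussianPDFReal 0 (a + b) t) := by
    intro t
    have hint : Integrable (fun u => gaussianPDFReal 0 a u * gaussianPDFReal u b t) := by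
      apply Integrable.congr ((integrable_gaussianPDFReal 0 a).bdd_mul
        ((measurable_gaussianPDFReal t b).aestronglyMeasurable)
        (c := (√(2 * π * (b:ℝ)))⁻¹) (Filter.Eventually.of_forall fun u => ?_))
      · refine Filter.Eventually.of_forall fun u => ?_
        show gaussianPDFReal t b u * gaussianPDFReal 0 a u
            = gaussianPDFReal 0 a u * gaussianPDFReal u b t
        have heq : gaussianPDFReal t b u = gaussianPDFReal u b t := by
          unfold gaussianPDFReal
          congr 2
          ring
        rw [heq]; ring
      · rw [Real.norm_eq_abs, abs_of_nonneg (gaussianPDFReal_nonneg _ _ _)]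
        unfold gaussianPDFReal
        refine mul_le_of_le_one_right (by positivity) (Real.exp_le_one_iff.mpr ?_)
        exact div_nonpos_of_nonpos_of_nonneg (neg_nonpos.mpr (sq_nonneg _)) (by positivity)
    calc ∫⁻ u, gaussianPDF 0 a u * ENNReal.ofReal (gaussianPDFReal u b t)
        = ∫⁻ u, ENNReal.ofReal (gaussianPDFReal 0 a u * gaussianPDFReal u b t) := by
          simp_rw [gaussianPDF, ← ENNReal.ofReal_mul (gaussianPDFReal_nonneg 0 a _)]
      _ = ENNReal.ofReal (∫ u, gaussianPDFReal 0 a u * gaussianPDFReal u b t) := by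
          rw [ofReal_integral_eq_lintegral_ofReal hint (Filter.Eventually.of_forall fun u =>
            mul_nonneg (gaussianPDFReal_nonneg _ _ _) (gaussianPDFReal_nonneg _ _ _))]
      _ = ENNReal.ofReal (gaussianPDFReal 0 (a + b) t) := by
          rw [show (∫ u, gaussianPDFReal 0 a u * gaussianPDFReal u b t)
              = ∫ u, gaussianPDFReal 0 a u * gaussianPDFReal 0 b (t - u) from by
            congr 1; funext u; rw [gaussianPDFReal_sub, zero_add], aux_conv a b ha hb t]
  simp_rw [hinner]
  rw [gaussianReal_apply 0 hab s]
  rfl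



lemma aux_map_pi {ι : Type*} [Fintype ι] {α β : Type*} [MeasurableSpace α] [MeasurableSpace β]
    (g : α → β) (hg : Measurable g) (ν : Measure α) [IsProbabilityMeasure ν] :
    (Measure.pi fun _ : ι => ν).map (fun y i => g (y i)) = Measure.pi fun _ : ι => ν.map g := by
  have : IsProbabilityMeasure (ν.map g) := Measure.isProbabilityMeasure_map hg.aemeasurable
  refine (Measure.pi_eq fun s hs => ?_).symm
  have hmeasF : Measurable (fun (y : ι → α) i => g (y i)) := by fun_prop
  rw [Measure.map_apply hmeasF (MeasurableSet.univ_pi hs)]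
  have hpre : (fun (y : ι → α) i => g (y i)) ⁻¹' Set.pi Set.univ s
      = Set.pi Set.univ fun i => g ⁻¹' s i := by
    ext y; simp [Set.mem_pi]
  rw [hpre, Measure.pi_pi]
  exact Finset.prod_congr rfl fun i _ => (Measure.map_apply hg (hs i)).symm

lemma aux_gauss_prodsum {α β : Type*} [MeasurableSpace α] [MeasurableSpace β]
    (μ : Measure α) (ν : Measure β) [SFinite μ] [SFinite ν]
    {f : α → ℝ} {g : β → ℝ} (hf : Measurable f) (hg : Measurable g) (va vb : ℝ≥0)
    (hμ : μ.map f = gaussianReal 0 va) (hν : ν.map g = gaussianReal 0 vb) :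
    (μ.prod ν).map (fun p => f p.1 + g p.2) = gaussianReal 0 (va + vb) := by
  have hcomp : (fun p : α × β => f p.1 + g p.2)
      = (fun q : ℝ × ℝ => q.1 + q.2) ∘ Prod.map f g := rfl
  rw [hcomp, ← Measure.map_map measurable_add (hf.prodMap hg),
    ← Measure.map_prod_map _ _ hf hg, hμ, hν, aux_gauss_add]

lemma aux_gauss_sum : ∀ (n : ℕ) (x : Fin n → ℝ),
    (Measure.pi fun _ : Fin n => gaussianReal 0 1).map (fun z => ∑ i, x i * z i)
      = gaussianReal 0 (∑ i, ‖x i‖₊ ^ 2) := by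
  intro n
  induction n with
  | zero =>
      intro x
      have : (fun z : Fin 0 → ℝ => ∑ i, x i * z i) = fun _ => (0:ℝ) := by
        funext z; simp
      rw [this, Measure.map_const]
      simp
  | succ n ih =>
      intro x
      have hmp := (measurePreserving_piFinSuccAbove (fun _ : Fin (n+1) => gaussianReal 0 1) 0).symm
      rw [← hmp.map_eq, Measure.map_map (by fun_prop) (MeasurableEquiv.measurable _)]
      have hcomp : ((fun z : Fin (n+1) → ℝ => ∑ i, x i * z i) ∘
            (MeasurableEquiv.piFinSuccAbove (fun _ => ℝ) 0).symm)
          = fun p : ℝ × (Fin n → ℝ) => x 0 * p.1 + ∑ j, x j.succ * p.2 j := by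
        funext p
        simp only [Function.comp_apply, MeasurableEquiv.piFinSuccAbove_symm_apply]
        rw [Fin.sum_univ_succ]
        simp [Fin.insertNth_zero]
      rw [hcomp]
      have h1 : (gaussianReal 0 1 : Measure ℝ).map (fun u => x 0 * u)
          = gaussianReal 0 (NNReal.mk ((x 0)^2) (sq_nonneg _) * 1) := by
        have := gaussianReal_map_const_mul (μ := 0) (v := 1) (x 0)
        simpa using this
      have h2 := ih (fun j => x j.succ)
      rw [aux_gauss_prodsum _ _ (by fun_prop) (by fun_prop) _ _ h1 h2]
      congr 1
      apply NNReal.coe_injective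
      push_cast
      rw [Fin.sum_univ_succ]
      simp [sq_abs]

lemma aux_pi_prod (ν : Measure ℝ) [IsProbabilityMeasure ν] (f : ℝ → ℝ) (hf : Integrable f ν) :
    ∀ m : ℕ, Integrable (fun y : Fin m → ℝ => ∏ i, f (y i)) (Measure.pi fun _ => ν) ∧
      ∫ y : Fin m → ℝ, ∏ i, f (y i) ∂(Measure.pi fun _ => ν) = (∫ u, f u ∂ν) ^ m := by
  intro m
  induction m with
  | zero =>
      constructor
      · simp only [Finset.univ_eq_empty, Finset.prod_empty]
        exact integrable_const 1
      · simp
  | succ m ih =>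
      have hmp := (measurePreserving_piFinSuccAbove (fun _ : Fin (m+1) => ν) 0).symm
      have hemb := MeasurableEquiv.measurableEmbedding
        (MeasurableEquiv.piFinSuccAbove (fun _ : Fin (m+1) => ℝ) 0).symm
      have hcomp' : ∀ p : ℝ × (Fin m → ℝ),
          ∏ i, f ((MeasurableEquiv.piFinSuccAbove (fun _ : Fin (m+1) => ℝ) 0).symm p i)
          = f p.1 * ∏ j, f (p.2 j) := by
        intro p
        simp only [MeasurableEquiv.piFinSuccAbove_symm_apply]
        rw [Fin.prod_univ_succ]
        simp [Fin.insertNth_zero]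
      have hcomp : ((fun y : Fin (m+1) → ℝ => ∏ i, f (y i)) ∘
            (MeasurableEquiv.piFinSuccAbove (fun _ => ℝ) 0).symm)
          = fun p : ℝ × (Fin m → ℝ) => f p.1 * ∏ j, f (p.2 j) :=
        funext fun p => hcomp' p
      have hint : Integrable (fun p : ℝ × (Fin m → ℝ) => f p.1 * ∏ j, f (p.2 j))
          (ν.prod (Measure.pi fun _ => ν)) := Integrable.mul_prod hf ih.1
      constructor
      · rw [← hmp.integrable_comp_emb hemb, hcomp]
        exact hint
      · rw [← hmp.integral_comp']
        simp_rw [hcomp']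
        rw [integral_prod_mul (f := f) (g := fun w : Fin m → ℝ => ∏ j, f (w j)), ih.2, pow_succ]
        ring



lemma aux_pdf_smul (t : ℝ) (u : ℝ) :
    (gaussianPDFReal 0 1 u).toNNReal • Real.exp (t * u^2)
      = (√(2 * π))⁻¹ * Real.exp (-(1/2 - t) * u^2) := by
  rw [NNReal.smul_def, smul_eq_mul, Real.coe_toNNReal _ (gaussianPDFReal_nonneg _ _ _)]
  unfold gaussianPDFReal
  rw [mul_assoc, ← Real.exp_add]
  have h1 : (2 * π * ((1:ℝ≥0):ℝ)) = 2 * π := by norm_num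
  rw [h1]
  congr 1
  push_cast
  ring

lemma aux_gauss_wd : gaussianReal 0 1
    = (volume : Measure ℝ).withDensity fun u => ((gaussianPDFReal 0 1 u).toNNReal : ℝ≥0∞) := by
  rw [gaussianReal_of_var_ne_zero 0 one_ne_zero]
  rfl

lemma aux_pdf_meas : Measurable fun u => (gaussianPDFReal 0 1 u).toNNReal :=
  (measurable_gaussianPDFReal 0 1).real_toNNReal

lemma aux_mgf_int {t : ℝ} (ht : t < 1/2) :
    Integrable (fun u => Real.exp (t * u^2)) (gaussianReal 0 1) := by
  rw [aux_gauss_wd, integrable_withDensity_iff_integrable_smul aux_pdf_meas]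
  refine Integrable.congr ?_ (Filter.Eventually.of_forall fun u => (aux_pdf_smul t u).symm)
  exact (integrable_exp_neg_mul_sq (by linarith)).const_mul _

lemma aux_mgf_val {t : ℝ} (ht : t < 1/2) :
    ∫ u, Real.exp (t * u^2) ∂(gaussianReal 0 1) = (Real.sqrt (1 - 2*t))⁻¹ := by
  rw [aux_gauss_wd, integral_withDensity_eq_integral_smul aux_pdf_meas]
  rw [integral_congr_ae (Filter.Eventually.of_forall fun u => aux_pdf_smul t u)]
  rw [MeasureTheory.integral_const_mul, integral_gaussian]
  rw [← Real.sqrt_inv, ← Real.sqrt_inv, ← Real.sqrt_mul (by positivity)]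
  congr 1
  have h2 : (0:ℝ) < 1/2 - t := by linarith
  have hπ : (0:ℝ) < π := Real.pi_pos
  have hπ0 : π ≠ 0 := ne_of_gt hπ
  have h20 : (1:ℝ)/2 - t ≠ 0 := ne_of_gt h2
  have h120 : (1:ℝ) - 2*t ≠ 0 := by intro h; apply h20; linarith [h]
  field_simp



lemma chi2_conc (m : ℕ) {ε : ℝ} (hε0 : 0 < ε) (hε1 : ε < 1) :
    ENNReal.ofReal (1 - 2 * Real.exp (-(ε^2 * (1-ε) * m / 4)))
      ≤ (Measure.pi fun _ : Fin m => gaussianReal 0 1)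
        {y | (1-ε) * m ≤ ∑ i, (y i)^2 ∧ ∑ i, (y i)^2 ≤ (1+ε) * m} := by
  set μpi : Measure (Fin m → ℝ) := Measure.pi fun _ => gaussianReal 0 1 with hμpi
  have : IsProbabilityMeasure μpi := by rw [hμpi]; infer_instance
  set X : (Fin m → ℝ) → ℝ := fun y => ∑ i, (y i)^2 with hX
  have hXm : Measurable X := by
    apply Finset.measurable_sum
    intro i _
    exact (measurable_pi_apply i).pow_const 2
  have hexp_prod : ∀ (t : ℝ) (y : Fin m → ℝ),
      Real.exp (t * X y) = ∏ i, (fun u => Real.exp (t * u^2)) (y i) := by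
    intro t y
    rw [hX, Finset.mul_sum, Real.exp_sum]
  have hInt : ∀ t : ℝ, t < 1/2 → Integrable (fun y => Real.exp (t * X y)) μpi := by
    intro t ht
    exact ((aux_pi_prod _ _ (aux_mgf_int ht) m).1).congr
      (Filter.Eventually.of_forall fun y => (hexp_prod t y).symm)
  have hMgf : ∀ t : ℝ, t < 1/2 → mgf X μpi t = ((Real.sqrt (1 - 2*t))⁻¹)^m := by
    intro t ht
    rw [mgf]
    rw [integral_congr_ae (Filter.Eventually.of_forall fun y => hexp_prod t y)]
    rw [(aux_pi_prod _ _ (aux_mgf_int ht) m).2, aux_mgf_val ht]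
  set E : ℝ := Real.exp (-(ε^2 * (1-ε) * m / 4)) with hE
  have h1e : (0:ℝ) < 1 + ε := by linarith
  have h1e' : (0:ℝ) < 1 - ε := by linarith
  -- upper tail
  have hup : μpi {y | (1+ε) * m ≤ X y} ≤ ENNReal.ofReal E := by
    set t1 : ℝ := ε / (2 * (1+ε)) with ht1
    have ht1a : 0 ≤ t1 := by positivity
    have ht1b : t1 < 1/2 := by
      rw [ht1, div_lt_div_iff₀ (by positivity) (by norm_num)]
      linarith
    have h0 := measure_ge_le_exp_mul_mgf (X := X) (μ := μpi) ((1+ε)*m) ht1a (hInt t1 ht1b)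
    rw [hMgf t1 ht1b] at h0
    have hw : 1 - 2*t1 = (1+ε)⁻¹ := by
      rw [ht1]
      field_simp
      ring
    rw [hw, Real.sqrt_inv, inv_inv] at h0
    have hexp1 : Real.exp (-t1 * ((1+ε)*m)) = (Real.exp (-ε/2))^m := by
      rw [← Real.exp_nat_mul]
      congr 1
      rw [ht1]
      field_simp
    rw [hexp1, ← mul_pow] at h0
    have hfac : Real.exp (-ε/2) * Real.sqrt (1+ε) ≤ Real.exp (-(ε^2 * (1-ε) / 4)) := by
      have hs : Real.sqrt (1+ε) ≤ Real.exp (ε/2 - ε^2 * (1-ε)/4) := by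
        have h2 : (1+ε) ≤ (Real.exp (ε/2 - ε^2 * (1-ε)/4))^2 := by
          rw [sq, ← Real.exp_add]
          refine le_trans (auxE1 hε0.le) (le_of_eq ?_)
          congr 1
          ring
        calc Real.sqrt (1+ε) ≤ Real.sqrt ((Real.exp (ε/2 - ε^2 * (1-ε)/4))^2) :=
              Real.sqrt_le_sqrt h2
          _ = Real.exp (ε/2 - ε^2 * (1-ε)/4) := Real.sqrt_sq (Real.exp_pos _).le
      calc Real.exp (-ε/2) * Real.sqrt (1+ε)
          ≤ Real.exp (-ε/2) * Real.exp (ε/2 - ε^2 * (1-ε)/4) := by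
            exact mul_le_mul_of_nonneg_left hs (Real.exp_pos _).le
        _ = Real.exp (-(ε^2 * (1-ε) / 4)) := by rw [← Real.exp_add]; congr 1; ring
    have hpow : (Real.exp (-ε/2) * Real.sqrt (1+ε))^m ≤ E := by
      rw [hE]
      calc (Real.exp (-ε/2) * Real.sqrt (1+ε))^m
          ≤ (Real.exp (-(ε^2 * (1-ε) / 4)))^m := by
            apply pow_le_pow_left₀ (by positivity) hfac
        _ = Real.exp (-(ε^2 * (1-ε) * m / 4)) := by
            rw [← Real.exp_nat_mul]; congr 1; ring
    have hfin := le_trans h0 hpow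
    rw [← ENNReal.ofReal_toReal (measure_ne_top μpi _)]
    exact ENNReal.ofReal_le_ofReal hfin
  -- lower tail
  have hlow : μpi {y | X y ≤ (1-ε) * m} ≤ ENNReal.ofReal E := by
    set t2 : ℝ := -(ε / (2 * (1-ε))) with ht2
    have ht2a : t2 ≤ 0 := by rw [ht2]; simp; positivity
    have ht2b : t2 < 1/2 := lt_of_le_of_lt ht2a (by norm_num)
    have h0 := measure_le_le_exp_mul_mgf (X := X) (μ := μpi) ((1-ε)*m) ht2a (hInt t2 ht2b)
    rw [hMgf t2 ht2b] at h0
    have hw : 1 - 2*t2 = (1-ε)⁻¹ := by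
      rw [ht2]
      have : (1:ℝ) - ε ≠ 0 := ne_of_gt h1e'
      field_simp
      ring
    rw [hw, Real.sqrt_inv, inv_inv] at h0
    have hexp1 : Real.exp (-t2 * ((1-ε)*m)) = (Real.exp (ε/2))^m := by
      rw [← Real.exp_nat_mul]
      congr 1
      rw [ht2]
      field_simp
    rw [hexp1, ← mul_pow] at h0
    have hfac : Real.exp (ε/2) * Real.sqrt (1-ε) ≤ Real.exp (-(ε^2 * (1-ε) / 4)) := by
      have hs : Real.sqrt (1-ε) ≤ Real.exp (-ε/2 - ε^2 * (1-ε)/4) := by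
        have h2 : (1-ε) ≤ (Real.exp (-ε/2 - ε^2 * (1-ε)/4))^2 := by
          rw [sq, ← Real.exp_add]
          refine le_trans (auxE2 hε0.le hε1.le) (Real.exp_le_exp.mpr ?_)
          nlinarith
        calc Real.sqrt (1-ε) ≤ Real.sqrt ((Real.exp (-ε/2 - ε^2 * (1-ε)/4))^2) :=
              Real.sqrt_le_sqrt h2
          _ = Real.exp (-ε/2 - ε^2 * (1-ε)/4) := Real.sqrt_sq (Real.exp_pos _).le
      calc Real.exp (ε/2) * Real.sqrt (1-ε)
          ≤ Real.exp (ε/2) * Real.exp (-ε/2 - ε^2 * (1-ε)/4) := by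
            exact mul_le_mul_of_nonneg_left hs (Real.exp_pos _).le
        _ = Real.exp (-(ε^2 * (1-ε) / 4)) := by rw [← Real.exp_add]; congr 1; ring
    have hpow : (Real.exp (ε/2) * Real.sqrt (1-ε))^m ≤ E := by
      rw [hE]
      calc (Real.exp (ε/2) * Real.sqrt (1-ε))^m
          ≤ (Real.exp (-(ε^2 * (1-ε) / 4)))^m := by
            apply pow_le_pow_left₀ (by positivity) hfac
        _ = Real.exp (-(ε^2 * (1-ε) * m / 4)) := by
            rw [← Real.exp_nat_mul]; congr 1; ring
    have hfin := le_trans h0 hpow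
    rw [← ENNReal.ofReal_toReal (measure_ne_top μpi _)]
    exact ENNReal.ofReal_le_ofReal hfin
  -- combine
  set Ev : Set (Fin m → ℝ) := {y | (1-ε) * m ≤ X y ∧ X y ≤ (1+ε) * m} with hEv
  have hEvm : MeasurableSet Ev := by
    apply MeasurableSet.inter
    · exact measurableSet_le measurable_const hXm
    · exact measurableSet_le hXm measurable_const
  have hsub : Evᶜ ⊆ {y | X y ≤ (1-ε) * m} ∪ {y | (1+ε) * m ≤ X y} := by
    intro y hy
    rw [Set.mem_compl_iff, hEv, Set.mem_setOf_eq, not_and_or] at hy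
    rcases hy with h | h
    · exact Or.inl (le_of_lt (not_le.mp h))
    · exact Or.inr (le_of_lt (not_le.mp h))
  have hcompl : μpi Evᶜ ≤ ENNReal.ofReal (2*E) := by
    calc μpi Evᶜ ≤ μpi ({y | X y ≤ (1-ε) * m} ∪ {y | (1+ε) * m ≤ X y}) := measure_mono hsub
      _ ≤ μpi {y | X y ≤ (1-ε) * m} + μpi {y | (1+ε) * m ≤ X y} := measure_union_le _ _
      _ ≤ ENNReal.ofReal E + ENNReal.ofReal E := add_le_add hlow hup
      _ = ENNReal.ofReal (2*E) := by
          rw [← ENNReal.ofReal_add (Real.exp_pos _).le (Real.exp_pos _).le, two_mul]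
  calc ENNReal.ofReal (1 - 2*E)
      = ENNReal.ofReal 1 - ENNReal.ofReal (2*E) := ENNReal.ofReal_sub _ (by positivity)
    _ = 1 - ENNReal.ofReal (2*E) := by rw [ENNReal.ofReal_one]
    _ ≤ 1 - μpi Evᶜ := tsub_le_tsub_left hcompl 1
    _ ≤ μpi Ev := by
        rw [tsub_le_iff_right]
        rw [measure_add_measure_compl hEvm]
        exact le_of_eq (measure_univ).symm

/-- For a random matrix `A ∈ ℝ^{m×n}` with i.i.d. standard normal entries and a fixed
vector `x ∈ ℝ^n`, for any `ε ∈ (0,1)`: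
`P((1−ε)‖x‖₂² ≤ ‖(1/√m) A x‖₂² ≤ (1+ε)‖x‖₂²) ≥ 1 − 2 e^{−ε²(1−ε)m/4}`. -/


theorem stmt_16 (m n : ℕ) (Ω : Type) [MeasurableSpace Ω] (P : Measure Ω)
    [IsProbabilityMeasure P] (A : Ω → Fin m → Fin n → ℝ) (hA : Measurable A)
    (hiid : IIDStdGaussian P m n A) (x : Fin n → ℝ) (ε : ℝ) (hε0 : 0 < ε) (hε1 : ε < 1) :
    P {ω | (1 - ε) * l2norm x ^ 2 ≤
            ((1 / Real.sqrt m) * l2norm fun i => A ω i ⬝ᵥ x) ^ 2 ∧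
           ((1 / Real.sqrt m) * l2norm fun i => A ω i ⬝ᵥ x) ^ 2 ≤
            (1 + ε) * l2norm x ^ 2} ≥
      ENNReal.ofReal (1 - 2 * Real.exp (-(ε ^ 2 * (1 - ε) * m / 4))) := by
  by_cases hm : m = 0
  · subst hm
    have hz : ENNReal.ofReal (1 - 2 * Real.exp (-(ε ^ 2 * (1 - ε) * (0:ℕ) / 4))) = 0 := by
      rw [ENNReal.ofReal_eq_zero]
      norm_num
    rw [ge_iff_le, hz]
    exact bot_le
  have hm0 : (0:ℝ) < m := Nat.cast_pos.mpr (Nat.pos_of_ne_zero hm)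
  set S : ℝ := ∑ i, (x i)^2 with hS
  have hS0 : 0 ≤ S := Finset.sum_nonneg fun i _ => sq_nonneg _
  have hl2x : l2norm x ^ 2 = S := Real.sq_sqrt hS0
  have hl2v : ∀ v : Fin m → ℝ, ((1 / Real.sqrt m) * l2norm v)^2 = (∑ i, (v i)^2) / m := by
    intro v
    rw [mul_pow, div_pow, one_pow, Real.sq_sqrt (Nat.cast_nonneg m), l2norm,
      Real.sq_sqrt (Finset.sum_nonneg fun i _ => sq_nonneg _)]
    ring
  by_cases hx : S = 0
  · have hx0 : ∀ i, x i = 0 := by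
      intro i
      have h2 := (Finset.sum_eq_zero_iff_of_nonneg (fun i _ => sq_nonneg (x i))).mp hx i
        (Finset.mem_univ i)
      exact pow_eq_zero_iff (two_ne_zero) |>.mp h2
    have hdot : ∀ (B : Fin n → ℝ), B ⬝ᵥ x = 0 := by
      intro B
      simp [dotProduct, hx0]
    have hset : {ω | (1 - ε) * l2norm x ^ 2 ≤
            ((1 / Real.sqrt m) * l2norm fun i => A ω i ⬝ᵥ x) ^ 2 ∧
           ((1 / Real.sqrt m) * l2norm fun i => A ω i ⬝ᵥ x) ^ 2 ≤
            (1 + ε) * l2norm x ^ 2} = Set.univ := by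
      ext ω
      simp only [Set.mem_setOf_eq, Set.mem_univ, iff_true]
      have hv : (fun i : Fin m => A ω i ⬝ᵥ x) = fun _ => (0:ℝ) := funext fun i => hdot _
      rw [hv, hl2x, hx]
      have : l2norm (fun _ : Fin m => (0:ℝ)) = 0 := by simp [l2norm]
      rw [this]
      norm_num
    rw [hset, ge_iff_le, measure_univ]
    exact ENNReal.ofReal_le_one.mpr (by nlinarith [Real.exp_pos (-(ε ^ 2 * (1 - ε) * m / 4))])
  have hSpos : 0 < S := lt_of_le_of_ne hS0 (Ne.symm hx)
  set g : (Fin n → ℝ) → ℝ := fun z => ∑ j, x j * z j with hg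
  have hgm : Measurable g :=
    Finset.measurable_sum _ fun j _ => (measurable_pi_apply j).const_mul _
  have hdotg : ∀ B : Fin n → ℝ, B ⬝ᵥ x = g B := by
    intro B
    rw [hg]
    simp only [dotProduct]
    exact Finset.sum_congr rfl fun j _ => mul_comm _ _
  set T : Set (Fin m → ℝ) := {v | (1-ε) * S * m ≤ ∑ i, (v i)^2 ∧ ∑ i, (v i)^2 ≤ (1+ε) * S * m}
    with hT
  have hsum_meas : Measurable fun v : Fin m → ℝ => ∑ i, (v i)^2 :=
    Finset.measurable_sum _ fun i _ => (measurable_pi_apply i).pow_const 2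
  have hTm : MeasurableSet T :=
    (measurableSet_le measurable_const hsum_meas).inter
      (measurableSet_le hsum_meas measurable_const)
  set F : (Fin m → Fin n → ℝ) → (Fin m → ℝ) := fun B i => g (B i) with hF
  have hFm : Measurable F := measurable_pi_lambda _ fun i => hgm.comp (measurable_pi_apply i)
  have hev : {ω | (1 - ε) * l2norm x ^ 2 ≤
            ((1 / Real.sqrt m) * l2norm fun i => A ω i ⬝ᵥ x) ^ 2 ∧
           ((1 / Real.sqrt m) * l2norm fun i => A ω i ⬝ᵥ x) ^ 2 ≤
            (1 + ε) * l2norm x ^ 2} = A ⁻¹' (F ⁻¹' T) := by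
    ext ω
    simp only [Set.mem_setOf_eq, Set.mem_preimage, hT, hF]
    rw [hl2v, hl2x]
    simp_rw [hdotg]
    constructor
    · rintro ⟨h1, h2⟩
      rw [le_div_iff₀ hm0] at h1
      rw [div_le_iff₀ hm0] at h2
      exact ⟨by nlinarith, by nlinarith⟩
    · rintro ⟨h1, h2⟩
      rw [le_div_iff₀ hm0, div_le_iff₀ hm0]
      exact ⟨by nlinarith, by nlinarith⟩
  rw [ge_iff_le, hev]
  have hiid' : Measure.map A P = Measure.pi fun _ : Fin m => Measure.pi fun _ : Fin n =>
      gaussianReal 0 1 := hiid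
  rw [← Measure.map_apply hA (hFm hTm), hiid', ← Measure.map_apply hFm hTm]
  have hmapF : (Measure.pi fun _ : Fin m => Measure.pi fun _ : Fin n =>
      gaussianReal 0 1).map F = Measure.pi fun _ : Fin m =>
      (Measure.pi fun _ : Fin n => gaussianReal 0 1).map g := aux_map_pi g hgm _
  rw [hmapF]
  have hmapg : (Measure.pi fun _ : Fin n => gaussianReal 0 1).map g
      = gaussianReal 0 (∑ i, ‖x i‖₊ ^ 2) := aux_gauss_sum n x
  set V : ℝ≥0 := ∑ i, ‖x i‖₊ ^ 2 with hV
  have hVS : (V:ℝ) = S := by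
    rw [hV, hS]
    push_cast
    refine Finset.sum_congr rfl fun i _ => ?_
    rw [Real.norm_eq_abs, sq_abs]
  have hscale : gaussianReal 0 V = (gaussianReal 0 1).map (fun u => Real.sqrt S * u) := by
    rw [gaussianReal_map_const_mul]
    congr 1
    · ring
    · apply NNReal.coe_injective
      push_cast
      rw [Real.sq_sqrt hS0, hVS]
      ring
  rw [hmapg, hscale]
  have hscalem : Measurable fun u : ℝ => Real.sqrt S * u := measurable_id.const_mul _
  have hpis : (Measure.pi fun _ : Fin m => (gaussianReal 0 1).map fun u => Real.sqrt S * u)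
      = (Measure.pi fun _ : Fin m => gaussianReal 0 1).map
        (fun y i => Real.sqrt S * y i) := (aux_map_pi _ hscalem _).symm
  have hscalemap : Measurable fun (y : Fin m → ℝ) i => Real.sqrt S * y i := by fun_prop
  rw [hpis, Measure.map_apply hscalemap hTm]
  have hpre : (fun (y : Fin m → ℝ) i => Real.sqrt S * y i) ⁻¹' T
      = {y : Fin m → ℝ | (1-ε) * m ≤ ∑ i, (y i)^2 ∧ ∑ i, (y i)^2 ≤ (1+ε) * m} := by
    ext y
    simp only [Set.mem_preimage, hT, Set.mem_setOf_eq]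
    have hsum : ∑ i, (Real.sqrt S * y i)^2 = S * ∑ i, (y i)^2 := by
      rw [Finset.mul_sum]
      refine Finset.sum_congr rfl fun i _ => ?_
      rw [mul_pow, Real.sq_sqrt hS0]
    rw [hsum]
    constructor
    · rintro ⟨h1, h2⟩
      constructor
      · nlinarith
      · nlinarith
    · rintro ⟨h1, h2⟩
      constructor
      · nlinarith
      · nlinarith
  rw [hpre]
  exact chi2_conc m hε0 hε1
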